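/- Let A_n^m have trivial multiplication on the radical (I_s I_p = 0 for s,p > m) and let Ω ⊂ ℝ³ be a domain with a_u ∉ ℝ or b_u ∉ ℝ for each u ≤ m. Then for any functions F_u holomorphic in D_u (u = 1,...,m) and G_s holomorphic in D_{u_s} (s = m+1,...,n), the function Φ(ζ) = Σ_{u=1}^m F_u(ξ_u) I_u + Σ_{s=m+1}^n G_s(ξ_{u_s}) I_s + Σ_{s=m+1}^n T_s F'_{u_s}(ξ_{u_s}) I_s, where ξ_u = x + y a_u + z b_u and T_s = y a_s + z b_s, is monogenic in Ω_ζ, i.e. continuous and Gateaux differentiable with hΦ'(ζ) = lim_{ε→0+}(Φ(ζ+εh)−Φ(ζ))/ε for all h ∈ E_3. -/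

import Mathlib

open Filter Set Finset

noncomputable def xiLM (a b : ℂ) : (ℝ × ℝ × ℝ) →ₗ[ℝ] ℂ where
  toFun p := (p.1 : ℂ) + (p.2.1 : ℂ) * a + (p.2.2 : ℂ) * b
  map_add' p q := by
    simp only [Prod.fst_add, Prod.snd_add]
    push_cast
    ring
  map_smul' c p := by
    simp only [Prod.smul_fst, Prod.smul_snd, smul_eq_mul, RingHom.id_apply,
      Complex.real_smul]
    push_cast
    ring

lemma xiLM_surj (a b : ℂ) (h : a.im ≠ 0 ∨ b.im ≠ 0) :
    Function.Surjective (xiLM a b) := by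
  intro c
  rcases h with h | h
  · refine ⟨(c.re - (c.im / a.im) * a.re, c.im / a.im, 0), ?_⟩
    simp only [xiLM, LinearMap.coe_mk, AddHom.coe_mk]
    apply Complex.ext <;>
      simp [Complex.add_re, Complex.add_im, Complex.mul_re, Complex.mul_im,
        div_mul_cancel₀, h]
  · refine ⟨(c.re - (c.im / b.im) * b.re, 0, c.im / b.im), ?_⟩
    simp only [xiLM, LinearMap.coe_mk, AddHom.coe_mk]
    apply Complex.ext <;>
      simp [Complex.add_re, Complex.add_im, Complex.mul_re, Complex.mul_im,
        div_mul_cancel₀, h]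

lemma xi_isOpenMap (a b : ℂ) (h : a.im ≠ 0 ∨ b.im ≠ 0) :
    IsOpenMap (fun p : ℝ × ℝ × ℝ => (p.1 : ℂ) + (p.2.1 : ℂ) * a + (p.2.2 : ℂ) * b) := by
  have hs := xiLM_surj a b h
  have := (LinearMap.toContinuousLinearMap (xiLM a b)).isOpenMap
    (by simpa using hs)
  simpa [xiLM] using this

/-- In `A_n^m` with trivial multiplication on the radical, the function
`Φ(ζ) = Σ_u F_u(ξ_u) I_u + Σ_s G_s(ξ_{u_s}) I_s + Σ_s T_s F'_{u_s}(ξ_{u_s}) I_s`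
built from holomorphic functions `F_u : D_u → ℂ`, `G_s : D_{u_s} → ℂ` is
monogenic in `Ω_ζ`: continuous and Gateaux differentiable. -/
theorem explicit_formula_is_monogenic (n m : ℕ) (hm : m ≤ n) (A : Type*)
    [NormedCommRing A] [NormedAlgebra ℂ A]
    (I : Module.Basis (Fin n) ℂ A)
    (hidem : ∀ r s : Fin n, r.val < m → s.val < m →
      I r * I s = if r = s then I r else 0)
    (u : Fin n → Fin n)
    (hu : ∀ s : Fin n, m ≤ s.val → (u s).val < m)
    (hmul3 : ∀ s : Fin n, m ≤ s.val → ∀ r : Fin n, r.val < m →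
      I r * I s = if r = u s then I s else 0)
    -- trivial multiplication on the radical
    (hrad : ∀ s p : Fin n, m ≤ s.val → m ≤ p.val → I s * I p = 0)
    (hone : ∑ w ∈ Finset.univ.filter (fun w : Fin n => w.val < m), I w = 1)
    (a b : Fin n → ℂ) (e₂ e₃ : A)
    (he₂ : e₂ = ∑ r, a r • I r) (he₃ : e₃ = ∑ r, b r • I r)
    (hindep : LinearIndependent ℝ ![(1 : A), e₂, e₃])
    (hab : ∀ w : Fin n, w.val < m → (a w).im ≠ 0 ∨ (b w).im ≠ 0)
    (Ω : Set (ℝ × ℝ × ℝ)) (hΩ : IsOpen Ω)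
    (ξ : Fin n → (ℝ × ℝ × ℝ) → ℂ)
    (hξ : ∀ w p, ξ w p = (p.1 : ℂ) + (p.2.1 : ℂ) * a w + (p.2.2 : ℂ) * b w)
    (T : Fin n → (ℝ × ℝ × ℝ) → ℂ)
    (hT : ∀ s p, T s p = (p.2.1 : ℂ) * a s + (p.2.2 : ℂ) * b s)
    (F G : Fin n → ℂ → ℂ)
    (hF : ∀ w : Fin n, w.val < m → DifferentiableOn ℂ (F w) (ξ w '' Ω))
    (hG : ∀ s : Fin n, m ≤ s.val → DifferentiableOn ℂ (G s) (ξ (u s) '' Ω))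
    (φ : ℝ × ℝ × ℝ → A)
    (hφ : ∀ p, φ p =
      (∑ w ∈ Finset.univ.filter (fun w : Fin n => w.val < m), F w (ξ w p) • I w)
      + (∑ s ∈ Finset.univ.filter (fun s : Fin n => m ≤ s.val),
          G s (ξ (u s) p) • I s)
      + ∑ s ∈ Finset.univ.filter (fun s : Fin n => m ≤ s.val),
          (T s p * deriv (F (u s)) (ξ (u s) p)) • I s) :
    ContinuousOn φ Ω
    ∧ ∀ p ∈ Ω, ∃ D : A, ∀ h₁ h₂ h₃ : ℝ,
        Tendsto (fun ε : ℝ => ε⁻¹ • (φ (p + ε • (h₁, h₂, h₃)) - φ p))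
          (nhdsWithin 0 (Ioi 0))
          (nhds ((h₁ • (1 : A) + h₂ • e₂ + h₃ • e₃) * D)) := by
  classical
  set Wm := Finset.univ.filter (fun w : Fin n => w.val < m) with hWmdef
  set Sm := Finset.univ.filter (fun s : Fin n => m ≤ s.val) with hSmdef
  have hWmem : ∀ w : Fin n, w ∈ Wm ↔ w.val < m := by
    intro w; simp [hWmdef]
  have hSmem : ∀ s : Fin n, s ∈ Sm ↔ m ≤ s.val := by
    intro s; simp [hSmdef]
  have hξfun : ∀ w : Fin n,
      ξ w = fun p : ℝ × ℝ × ℝ => (p.1 : ℂ) + (p.2.1 : ℂ) * a w + (p.2.2 : ℂ) * b w :=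
    fun w => funext (hξ w)
  have hDo : ∀ w : Fin n, w.val < m → IsOpen (ξ w '' Ω) := by
    intro w hw
    rw [hξfun w]
    exact xi_isOpenMap (a w) (b w) (hab w hw) Ω hΩ
  have hξc : ∀ w : Fin n, Continuous (ξ w) := by
    intro w; rw [hξfun w]; fun_prop
  have hTc : ∀ s : Fin n, Continuous (T s) := by
    intro s
    have : T s = fun p : ℝ × ℝ × ℝ => (p.2.1 : ℂ) * a s + (p.2.2 : ℂ) * b s :=
      funext (hT s)
    rw [this]; fun_prop
  have hFa : ∀ w : Fin n, w.val < m → AnalyticOnNhd ℂ (F w) (ξ w '' Ω) :=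
    fun w hw => (hF w hw).analyticOnNhd (hDo w hw)
  have hGa : ∀ s : Fin n, m ≤ s.val → AnalyticOnNhd ℂ (G s) (ξ (u s) '' Ω) :=
    fun s hs => (hG s hs).analyticOnNhd (hDo (u s) (hu s hs))
  have hFd : ∀ w : Fin n, w.val < m → AnalyticOnNhd ℂ (deriv (F w)) (ξ w '' Ω) :=
    fun w hw => (hFa w hw).deriv
  -- the generic multiplication formula
  have hprod : ∀ c₁ c₂ d₁ d₂ : Fin n → ℂ,
      ((∑ w ∈ Wm, c₁ w • I w) + ∑ s ∈ Sm, c₂ s • I s) *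
        ((∑ w ∈ Wm, d₁ w • I w) + ∑ s ∈ Sm, d₂ s • I s)
      = (∑ w ∈ Wm, (c₁ w * d₁ w) • I w)
        + ∑ s ∈ Sm, (c₁ (u s) * d₂ s + c₂ s * d₁ (u s)) • I s := by
    intro c₁ c₂ d₁ d₂
    rw [add_mul, mul_add, mul_add]
    have e11 : (∑ w ∈ Wm, c₁ w • I w) * (∑ w ∈ Wm, d₁ w • I w)
        = ∑ w ∈ Wm, (c₁ w * d₁ w) • I w := by
      rw [Finset.sum_mul_sum]
      refine Finset.sum_congr rfl fun w hw => ?_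
      have hw' : w.val < m := (hWmem w).mp hw
      have : ∀ w' ∈ Wm, (c₁ w • I w) * (d₁ w' • I w')
          = if w = w' then (c₁ w * d₁ w') • I w else 0 := by
        intro w' hw2
        rw [smul_mul_smul_comm, hidem w w' hw' ((hWmem w').mp hw2)]
        split <;> simp
      rw [Finset.sum_congr rfl this, Finset.sum_ite_eq Wm w
        (fun w' => (c₁ w * d₁ w') • I w), if_pos hw]
    have e12 : (∑ w ∈ Wm, c₁ w • I w) * (∑ s ∈ Sm, d₂ s • I s)
        = ∑ s ∈ Sm, (c₁ (u s) * d₂ s) • I s := by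
      rw [Finset.sum_mul_sum, Finset.sum_comm]
      refine Finset.sum_congr rfl fun s hs => ?_
      have hs' : m ≤ s.val := (hSmem s).mp hs
      have : ∀ w ∈ Wm, (c₁ w • I w) * (d₂ s • I s)
          = if w = u s then (c₁ w * d₂ s) • I s else 0 := by
        intro w hw
        rw [smul_mul_smul_comm, hmul3 s hs' w ((hWmem w).mp hw)]
        split <;> simp
      rw [Finset.sum_congr rfl this, Finset.sum_ite_eq' Wm (u s)
        (fun w => (c₁ w * d₂ s) • I s), if_pos ((hWmem _).mpr (hu s hs'))]
    have e21 : (∑ s ∈ Sm, c₂ s • I s) * (∑ w ∈ Wm, d₁ w • I w)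
        = ∑ s ∈ Sm, (c₂ s * d₁ (u s)) • I s := by
      rw [Finset.sum_mul_sum]
      refine Finset.sum_congr rfl fun s hs => ?_
      have hs' : m ≤ s.val := (hSmem s).mp hs
      have : ∀ w ∈ Wm, (c₂ s • I s) * (d₁ w • I w)
          = if w = u s then (c₂ s * d₁ w) • I s else 0 := by
        intro w hw
        rw [smul_mul_smul_comm, mul_comm (I s) (I w), hmul3 s hs' w ((hWmem w).mp hw)]
        split <;> simp
      rw [Finset.sum_congr rfl this, Finset.sum_ite_eq' Wm (u s)
        (fun w => (c₂ s * d₁ w) • I s), if_pos ((hWmem _).mpr (hu s hs'))]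
    have e22 : (∑ s ∈ Sm, c₂ s • I s) * (∑ s ∈ Sm, d₂ s • I s) = 0 := by
      rw [Finset.sum_mul_sum]
      refine Finset.sum_eq_zero fun s hs => Finset.sum_eq_zero fun s' hs' => ?_
      rw [smul_mul_smul_comm, hrad s s' ((hSmem s).mp hs) ((hSmem s').mp hs'), smul_zero]
    rw [e11, e12, e21, e22, add_zero, add_assoc, ← Finset.sum_add_distrib]
    congr 1
    refine Finset.sum_congr rfl fun s _ => ?_
    rw [← add_smul]
  constructor
  · -- continuity
    have hφfun : φ = fun p =>
        (∑ w ∈ Wm, F w (ξ w p) • I w) + (∑ s ∈ Sm, G s (ξ (u s) p) • I s)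
        + ∑ s ∈ Sm, (T s p * deriv (F (u s)) (ξ (u s) p)) • I s := funext hφ
    rw [hφfun]
    refine ContinuousOn.add (ContinuousOn.add ?_ ?_) ?_
    · refine continuousOn_finset_sum _ fun w hw => ?_
      exact (((hFa w ((hWmem w).mp hw)).continuousOn).comp
        (hξc w).continuousOn (mapsTo_image _ _)).smul continuousOn_const
    · refine continuousOn_finset_sum _ fun s hs => ?_
      exact (((hGa s ((hSmem s).mp hs)).continuousOn).comp
        (hξc (u s)).continuousOn (mapsTo_image _ _)).smul continuousOn_const
    · refine continuousOn_finset_sum _ fun s hs => ?_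
      exact (((hTc s).continuousOn).mul
        (((hFd (u s) (hu s ((hSmem s).mp hs))).continuousOn).comp
          (hξc (u s)).continuousOn (mapsTo_image _ _))).smul continuousOn_const
  · -- differentiability
    intro p hp
    have hmemD : ∀ w : Fin n, ξ w p ∈ ξ w '' Ω := fun w => ⟨p, hp, rfl⟩
    refine ⟨(∑ w ∈ Wm, deriv (F w) (ξ w p) • I w)
      + ∑ s ∈ Sm, (deriv (G s) (ξ (u s) p)
          + T s p * deriv (deriv (F (u s))) (ξ (u s) p)) • I s, ?_⟩
    intro h₁ h₂ h₃
    set v : ℝ × ℝ × ℝ := (h₁, h₂, h₃) with hv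
    set χ : Fin n → ℂ := fun r => (h₁ : ℂ) + (h₂ : ℂ) * a r + (h₃ : ℂ) * b r with hχ
    set τ : Fin n → ℂ := fun r => (h₂ : ℂ) * a r + (h₃ : ℂ) * b r with hτ
    have hξε : ∀ (w : Fin n) (ε : ℝ), ξ w (p + ε • v) = ξ w p + ε • χ w := by
      intro w ε
      rw [hξ, hξ]
      simp only [hv, hχ, Prod.fst_add, Prod.snd_add, Prod.smul_fst, Prod.smul_snd,
        smul_eq_mul, Complex.real_smul]
      push_cast
      ring
    have hTε : ∀ (s : Fin n) (ε : ℝ), T s (p + ε • v) = T s p + ε • τ s := by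
      intro s ε
      rw [hT, hT]
      simp only [hv, hτ, Prod.fst_add, Prod.snd_add, Prod.smul_fst, Prod.smul_snd,
        smul_eq_mul, Complex.real_smul]
      push_cast
      ring
    have hlin : ∀ c z : ℂ, HasDerivAt (fun ε : ℝ => c + ε • z) z 0 := by
      intro c z
      simpa using ((hasDerivAt_id (0 : ℝ)).smul_const z).const_add c
    have hcomp : ∀ (f : ℂ → ℂ) (w : Fin n), AnalyticOnNhd ℂ f (ξ w '' Ω) →
        HasDerivAt (fun ε : ℝ => f (ξ w p + ε • χ w)) (χ w * deriv f (ξ w p)) 0 := by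
      intro f w hf
      have h1 : HasDerivAt f (deriv f (ξ w p)) (ξ w p) :=
        ((hf _ (hmemD w)).differentiableAt).hasDerivAt
      have h2 := h1.scomp_of_eq (0 : ℝ) (hlin (ξ w p) (χ w)) (by simp)
      simpa [Function.comp_def, smul_eq_mul] using h2
    have hd1 : HasDerivAt (fun ε : ℝ => ∑ w ∈ Wm, F w (ξ w p + ε • χ w) • I w)
        (∑ w ∈ Wm, (χ w * deriv (F w) (ξ w p)) • I w) 0 := by
      refine HasDerivAt.fun_sum fun w hw => ?_
      exact (hcomp (F w) w (hFa w ((hWmem w).mp hw))).smul_const (I w)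
    have hd2 : HasDerivAt (fun ε : ℝ => ∑ s ∈ Sm, G s (ξ (u s) p + ε • χ (u s)) • I s)
        (∑ s ∈ Sm, (χ (u s) * deriv (G s) (ξ (u s) p)) • I s) 0 := by
      refine HasDerivAt.fun_sum fun s hs => ?_
      exact (hcomp (G s) (u s) (hGa s ((hSmem s).mp hs))).smul_const (I s)
    have hd3 : HasDerivAt (fun ε : ℝ => ∑ s ∈ Sm,
          ((T s p + ε • τ s) * deriv (F (u s)) (ξ (u s) p + ε • χ (u s))) • I s)
        (∑ s ∈ Sm, (τ s * deriv (F (u s)) (ξ (u s) p)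
          + T s p * (χ (u s) * deriv (deriv (F (u s))) (ξ (u s) p))) • I s) 0 := by
      refine HasDerivAt.fun_sum fun s hs => ?_
      have hs' : m ≤ s.val := (hSmem s).mp hs
      have hmul := ((hlin (T s p) (τ s)).mul
        (hcomp (deriv (F (u s))) (u s) (hFd (u s) (hu s hs')))).smul_const (I s)
      simpa using hmul
    have hsum := (hd1.add hd2).add hd3
    have hgeq : (fun ε : ℝ => φ (p + ε • v))
        = fun ε : ℝ =>
          ((∑ w ∈ Wm, F w (ξ w p + ε • χ w) • I w)
          + ∑ s ∈ Sm, G s (ξ (u s) p + ε • χ (u s)) • I s)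
          + ∑ s ∈ Sm,
            ((T s p + ε • τ s) * deriv (F (u s)) (ξ (u s) p + ε • χ (u s))) • I s := by
      funext ε
      rw [hφ]
      simp only [hξε, hTε]
    have hder : HasDerivAt (fun ε : ℝ => φ (p + ε • v))
        ((((∑ w ∈ Wm, (χ w * deriv (F w) (ξ w p)) • I w)
          + ∑ s ∈ Sm, (χ (u s) * deriv (G s) (ξ (u s) p)) • I s))
          + ∑ s ∈ Sm, (τ s * deriv (F (u s)) (ξ (u s) p)
            + T s p * (χ (u s) * deriv (deriv (F (u s))) (ξ (u s) p))) • I s) 0 := by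
      rw [hgeq]; exact hsum
    -- identify the limit with (h₁•1+h₂•e₂+h₃•e₃)*D
    have hsplit : ∀ f : Fin n → A, ∑ r, f r = (∑ r ∈ Wm, f r) + ∑ r ∈ Sm, f r := by
      intro f
      have : Sm = Finset.univ.filter (fun w : Fin n => ¬ w.val < m) := by
        ext w; simp [hSmdef, not_lt]
      rw [this, Finset.sum_filter_add_sum_filter_not]
    have hW : ∑ w ∈ Wm, (h₁ • I w + (h₂ • (a w • I w) + h₃ • (b w • I w)))
        = ∑ w ∈ Wm, χ w • I w := by
      refine Finset.sum_congr rfl fun w _ => ?_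
      simp only [hχ]
      rw [add_smul, add_smul, mul_smul, mul_smul, Complex.coe_smul,
        Complex.coe_smul, Complex.coe_smul, add_assoc]
    have hS : ∑ s ∈ Sm, (h₂ • (a s • I s) + h₃ • (b s • I s))
        = ∑ s ∈ Sm, τ s • I s := by
      refine Finset.sum_congr rfl fun s _ => ?_
      simp only [hτ]
      rw [add_smul, mul_smul, mul_smul, Complex.coe_smul, Complex.coe_smul]
    have hHv : h₁ • (1 : A) + h₂ • e₂ + h₃ • e₃
        = (∑ w ∈ Wm, χ w • I w) + ∑ s ∈ Sm, τ s • I s := by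
      rw [← hone, he₂, he₃, hsplit (fun r => a r • I r), hsplit (fun r => b r • I r),
        ← hW, ← hS]
      simp only [Finset.smul_sum, smul_add, Finset.sum_add_distrib]
      abel
    have hfinal : (((∑ w ∈ Wm, (χ w * deriv (F w) (ξ w p)) • I w)
          + ∑ s ∈ Sm, (χ (u s) * deriv (G s) (ξ (u s) p)) • I s))
          + ∑ s ∈ Sm, (τ s * deriv (F (u s)) (ξ (u s) p)
            + T s p * (χ (u s) * deriv (deriv (F (u s))) (ξ (u s) p))) • I s
        = (h₁ • (1 : A) + h₂ • e₂ + h₃ • e₃) *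
          ((∑ w ∈ Wm, deriv (F w) (ξ w p) • I w)
            + ∑ s ∈ Sm, (deriv (G s) (ξ (u s) p)
              + T s p * deriv (deriv (F (u s))) (ξ (u s) p)) • I s) := by
      rw [hHv, hprod χ τ (fun w => deriv (F w) (ξ w p))
        (fun s => deriv (G s) (ξ (u s) p) + T s p * deriv (deriv (F (u s))) (ξ (u s) p))]
      rw [add_assoc, ← Finset.sum_add_distrib]
      congr 1
      refine Finset.sum_congr rfl fun s _ => ?_
      rw [← add_smul]
      congr 1
      ring
    rw [← hfinal]
    have h1 := hasDerivAt_iff_tendsto_slope.mp hder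
    refine (h1.mono_left (nhdsWithin_mono _ fun x hx => ?_)).congr fun ε => ?_
    · exact ne_of_gt hx
    · rw [slope_def_module]
      simp
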